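/- In a Lorentzian pre-length space with τ continuous (as a map into [0,∞]) and τ(x,x) = 0 for all x, the arclength function φ(t) := L_τ(γ|_{[a,t]}) of a future-directed causal curve γ : [a,b] → X with L_τ(γ) < ∞ is monotonically increasing and continuous. -/

import Mathlib

open scoped ENNReal NNReal

/-- A Lorentzian pre-length space: a metric space `X` with a preorder `causal` (≤),
a transitive relation `chron` (≪) contained in `causal`, and a lower semicontinuous
time separation function `tau : X × X → [0,∞]` satisfying the reverse triangle
inequality on causal chains, `tau x y = 0` if `¬ causal x y`, and `tau x y > 0 ↔ chron x y`. -/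
structure LorentzianPreLengthSpace (X : Type*) [MetricSpace X] where
  causal : X → X → Prop
  chron : X → X → Prop
  tau : X → X → ℝ≥0∞
  causal_refl : ∀ x, causal x x
  causal_trans : ∀ {x y z}, causal x y → causal y z → causal x z
  chron_trans : ∀ {x y z}, chron x y → chron y z → chron x z
  chron_imp_causal : ∀ {x y}, chron x y → causal x y
  tau_lsc : LowerSemicontinuous (fun p : X × X => tau p.1 p.2)
  rev_triangle : ∀ {x y z}, causal x y → causal y z → tau x y + tau y z ≤ tau x z
  tau_eq_zero_of_not_causal : ∀ {x y}, ¬ causal x y → tau x y = 0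
  tau_pos_iff : ∀ {x y}, 0 < tau x y ↔ chron x y

variable {X : Type*} [MetricSpace X]

/-- A future-directed causal curve on `[a,b]`: non-constant, Lipschitz on `[a,b]`,
with causally related values. -/
def IsCausalCurve (L : LorentzianPreLengthSpace X) (γ : ℝ → X) (a b : ℝ) : Prop :=
  a < b ∧ (∃ s ∈ Set.Icc a b, ∃ t ∈ Set.Icc a b, γ s ≠ γ t) ∧
  (∃ K : ℝ≥0, LipschitzOnWith K γ (Set.Icc a b)) ∧
  ∀ s t, a ≤ s → s < t → t ≤ b → L.causal (γ s) (γ t)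

/-- A future-directed timelike curve on `[a,b]`. -/
def IsTimelikeCurve (L : LorentzianPreLengthSpace X) (γ : ℝ → X) (a b : ℝ) : Prop :=
  a < b ∧ (∃ s ∈ Set.Icc a b, ∃ t ∈ Set.Icc a b, γ s ≠ γ t) ∧
  (∃ K : ℝ≥0, LipschitzOnWith K γ (Set.Icc a b)) ∧
  ∀ s t, a ≤ s → s < t → t ≤ b → L.chron (γ s) (γ t)

/-- The τ-length of a curve on `[a,b]`: the infimum over all partitions
`a = t₀ < t₁ < ... < t_N = b` of `Σᵢ τ(γ(tᵢ), γ(t_{i+1}))`. -/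
noncomputable def tauLength (L : LorentzianPreLengthSpace X) (γ : ℝ → X) (a b : ℝ) : ℝ≥0∞ :=
  ⨅ (N : ℕ) (t : Fin (N + 1) → ℝ) (_ : StrictMono t) (_ : t 0 = a)
    (_ : t (Fin.last N) = b),
    ∑ i : Fin N, L.tau (γ (t i.castSucc)) (γ (t i.succ))

lemma tauLength_le_sum (L : LorentzianPreLengthSpace X) (γ : ℝ → X) (a c : ℝ)
    (N : ℕ) (t : Fin (N+1) → ℝ) (h1 : StrictMono t) (h2 : t 0 = a)
    (h3 : t (Fin.last N) = c) :
    tauLength L γ a c ≤ ∑ i : Fin N, L.tau (γ (t i.castSucc)) (γ (t i.succ)) :=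
  iInf_le_of_le N (iInf_le_of_le t (iInf_le_of_le h1 (iInf_le_of_le h2 (iInf_le _ h3))))

lemma tauLength_self (L : LorentzianPreLengthSpace X) (γ : ℝ → X) (a : ℝ) :
    tauLength L γ a a = 0 := by
  refine le_antisymm ?_ zero_le
  have hsm : StrictMono (fun _ : Fin 1 => a) := by
    intro i j hij
    have hi := i.isLt; have hj := j.isLt
    have := Fin.lt_def.mp hij
    omega
  simpa using tauLength_le_sum L γ a a 0 (fun _ => a) hsm rfl rfl

lemma tauLength_subadd (L : LorentzianPreLengthSpace X) (γ : ℝ → X) (a : ℝ) {s c : ℝ}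
    (hsc : s < c) :
    tauLength L γ a c ≤ tauLength L γ a s + L.tau (γ s) (γ c) := by
  rw [← tsub_le_iff_right]
  unfold tauLength
  refine le_iInf fun N => le_iInf fun t => le_iInf fun h1 => le_iInf fun h2 =>
    le_iInf fun h3 => ?_
  rw [tsub_le_iff_right]
  set u : Fin (N+1+1) → ℝ := fun i => if h' : i.val ≤ N then t ⟨i.val, by omega⟩ else c with hu
  have humono : StrictMono u := by
    intro i i' hii
    have hlt : i.val < i'.val := hii
    by_cases h' : i'.val ≤ N
    · have hi : i.val ≤ N := by omega
      simp only [hu, dif_pos hi, dif_pos h']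
      exact h1 (show (⟨i.val, by omega⟩ : Fin (N+1)) < ⟨i'.val, by omega⟩ from hlt)
    · have hi : i.val ≤ N := by have := i'.isLt; omega
      simp only [hu, dif_pos hi, dif_neg h']
      refine lt_of_le_of_lt ?_ hsc
      rw [← h3]
      exact h1.monotone (by rw [Fin.le_def]; simpa using hi)
  have hu0 : u 0 = a := by
    simp only [hu, Fin.val_zero, dif_pos (Nat.zero_le N)]
    rw [← h2]
    exact congrArg t (Fin.ext (by simp))
  have hulast : u (Fin.last (N+1)) = c := by
    simp only [hu, Fin.val_last]
    rw [dif_neg (by omega)]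
  refine le_trans (tauLength_le_sum L γ a c (N+1) u humono hu0 hulast) (le_of_eq ?_)
  rw [Fin.sum_univ_castSucc]
  congr 1
  · refine Finset.sum_congr rfl fun i _ => ?_
    have hiN : i.val < N := i.isLt
    have e1 : u i.castSucc.castSucc = t i.castSucc := by
      simp only [hu, Fin.coe_castSucc]
      rw [dif_pos (by omega : i.val ≤ N)]
      exact congrArg t (Fin.ext (by simp))
    have e2 : u i.castSucc.succ = t i.succ := by
      simp only [hu, Fin.val_succ, Fin.coe_castSucc]
      rw [dif_pos (by omega : i.val + 1 ≤ N)]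
      exact congrArg t (Fin.ext (by simp))
    rw [e1, e2]
  · have e1 : u (Fin.last N).castSucc = s := by
      simp only [hu, Fin.coe_castSucc, Fin.val_last]
      rw [dif_pos (le_refl N), ← h3]
      congr 1
    have e2 : u (Fin.last N).succ = c := by
      simp only [hu, Fin.val_succ, Fin.val_last]
      rw [dif_neg (by omega)]
    rw [e1, e2]

lemma tauLength_mono (L : LorentzianPreLengthSpace X) {γ : ℝ → X} {a b : ℝ}
    (hγ : IsCausalCurve L γ a b) {s c : ℝ} (has : a ≤ s) (hsc : s ≤ c) (hcb : c ≤ b) :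
    tauLength L γ a s ≤ tauLength L γ a c := by
  rcases eq_or_lt_of_le has with h | h
  · rw [← h, tauLength_self]
    exact zero_le
  obtain ⟨hab, -, -, hcaus⟩ := hγ
  conv_rhs => rw [tauLength]
  refine le_iInf fun N => le_iInf fun t => le_iInf fun h1 => le_iInf fun h2 =>
    le_iInf fun h3 => ?_
  have htmem : ∀ i : Fin (N+1), a ≤ t i ∧ t i ≤ c := by
    intro i
    constructor
    · rw [← h2]; exact h1.monotone (Fin.zero_le i)
    · rw [← h3]; exact h1.monotone (Fin.le_last i)
  set S : Finset (Fin (N+1)) := Finset.univ.filter (fun i => t i < s) with hS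
  have h0S : (0 : Fin (N+1)) ∈ S := by simp [hS, h2, h]
  have hSne : S.Nonempty := ⟨0, h0S⟩
  set j := S.max' hSne with hj
  have hjlt : t j < s := by
    have := S.max'_mem hSne
    simp only [hS, Finset.mem_filter] at this
    exact this.2
  have hjmax : ∀ i, t i < s → i ≤ j := fun i hi =>
    S.le_max' i (by simp only [hS, Finset.mem_filter]; exact ⟨Finset.mem_univ _, hi⟩)
  have hjN : j.val < N := by
    by_contra hcon
    have hjl : j = Fin.last N := Fin.ext (by have := j.isLt; simp only [Fin.val_last]; omega)
    rw [hjl, h3] at hjlt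
    exact absurd (lt_of_lt_of_le hjlt hsc) (lt_irrefl c)
  set j1 : Fin (N+1) := ⟨j.val + 1, by omega⟩ with hj1
  have hsj1 : s ≤ t j1 := by
    by_contra hcon
    push_neg at hcon
    have hle := hjmax j1 hcon
    rw [Fin.le_def] at hle
    simp only [hj1] at hle
    omega
  set M := j.val with hM
  set u : Fin (M+1+1) → ℝ := fun i => if h' : i.val ≤ M then t ⟨i.val, by omega⟩ else s with hu
  have humono : StrictMono u := by
    intro i i' hii
    have hlt : i.val < i'.val := hii
    by_cases h' : i'.val ≤ M
    · have hi : i.val ≤ M := by omega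
      simp only [hu, dif_pos hi, dif_pos h']
      exact h1 (show (⟨i.val, by omega⟩ : Fin (N+1)) < ⟨i'.val, by omega⟩ from hlt)
    · have hi : i.val ≤ M := by have := i'.isLt; omega
      simp only [hu, dif_pos hi, dif_neg h']
      refine lt_of_le_of_lt ?_ hjlt
      exact h1.monotone (by rw [Fin.le_def]; simpa using hi)
  have hu0 : u 0 = a := by
    simp only [hu, Fin.val_zero, dif_pos (Nat.zero_le M)]
    rw [← h2]
    exact congrArg t (Fin.ext (by simp))
  have hulast : u (Fin.last (M+1)) = s := by
    simp only [hu, Fin.val_last]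
    rw [dif_neg (by omega)]
  refine le_trans (tauLength_le_sum L γ a s (M+1) u humono hu0 hulast) ?_
  have hcast : M + 1 ≤ N := by omega
  calc ∑ i : Fin (M+1), L.tau (γ (u i.castSucc)) (γ (u i.succ))
      ≤ ∑ i : Fin (M+1),
          L.tau (γ (t (Fin.castLE hcast i).castSucc)) (γ (t (Fin.castLE hcast i).succ)) := by
        refine Finset.sum_le_sum fun i _ => ?_
        have hiM : i.val ≤ M := i.is_le
        have e1 : u i.castSucc = t (Fin.castLE hcast i).castSucc := by
          simp only [hu, Fin.coe_castSucc]
          rw [dif_pos hiM]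
          exact congrArg t (Fin.ext (by simp))
        rw [e1]
        rcases lt_or_eq_of_le hiM with hiM' | hiM'
        · have e2 : u i.succ = t (Fin.castLE hcast i).succ := by
            simp only [hu, Fin.val_succ]
            rw [dif_pos (by omega : i.val + 1 ≤ M)]
            exact congrArg t (Fin.ext (by simp))
          rw [e2]
        · -- i.val = M : the last piece
          have e2 : u i.succ = s := by
            simp only [hu, Fin.val_succ]
            rw [dif_neg (by omega)]
          have ej : (Fin.castLE hcast i).castSucc = j := Fin.ext (by simp [hiM', hM])
          have ej1 : (Fin.castLE hcast i).succ = j1 := Fin.ext (by simp [hiM', hj1, hM])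
          rw [e2, ej, ej1]
          rcases eq_or_lt_of_le hsj1 with he | hlt'
          · rw [← he]
          · have hc1 : L.causal (γ (t j)) (γ s) :=
              hcaus (t j) s (htmem j).1 hjlt (le_trans hsc hcb)
            have hc2 : L.causal (γ s) (γ (t j1)) :=
              hcaus s (t j1) h.le hlt' (le_trans (htmem j1).2 hcb)
            exact le_trans le_self_add (L.rev_triangle hc1 hc2)
    _ = ∑ i ∈ Finset.univ.map (Fin.castLEEmb hcast),
          L.tau (γ (t i.castSucc)) (γ (t i.succ)) := by
        rw [Finset.sum_map]
        rfl
    _ ≤ ∑ i : Fin N, L.tau (γ (t i.castSucc)) (γ (t i.succ)) :=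
        Finset.sum_le_sum_of_subset (Finset.subset_univ _)

/-- If τ is continuous and vanishes on the diagonal, the arclength function
`t ↦ L_τ(γ|_{[a,t]})` of a causal curve of finite τ-length is monotone and continuous. -/
theorem arclength_monotone_continuous (L : LorentzianPreLengthSpace X)
    (htau_cont : Continuous fun p : X × X => L.tau p.1 p.2)
    (hdiag : ∀ x, L.tau x x = 0)
    {γ : ℝ → X} {a b : ℝ}
    (hγ : IsCausalCurve L γ a b)
    (hfin : tauLength L γ a b < ⊤) :
    MonotoneOn (fun t => tauLength L γ a t) (Set.Icc a b) ∧
    ContinuousOn (fun t => tauLength L γ a t) (Set.Icc a b) := by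
  have hmono : MonotoneOn (fun t => tauLength L γ a t) (Set.Icc a b) :=
    fun s hs t ht hst => tauLength_mono L hγ hs.1 hst ht.2
  refine ⟨hmono, ?_⟩
  obtain ⟨K, hK⟩ := hγ.2.2.1
  have hγc : ContinuousOn γ (Set.Icc a b) := hK.continuousOn
  intro t₀ ht₀
  have hfin' : tauLength L γ a t₀ ≠ ⊤ :=
    ne_top_of_le_ne_top hfin.ne (tauLength_mono L hγ ht₀.1 ht₀.2 le_rfl)
  refine (ENNReal.tendsto_nhds hfin').mpr fun ε hε => ?_
  have hγt : ContinuousWithinAt γ (Set.Icc a b) t₀ := hγc t₀ ht₀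
  have hψ : Filter.Tendsto (fun t => L.tau (γ t) (γ t₀)) (nhdsWithin t₀ (Set.Icc a b))
      (nhds (L.tau (γ t₀) (γ t₀))) :=
    htau_cont.continuousAt.comp_continuousWithinAt (hγt.prodMk continuousWithinAt_const)
  have hψ' : Filter.Tendsto (fun t => L.tau (γ t₀) (γ t)) (nhdsWithin t₀ (Set.Icc a b))
      (nhds (L.tau (γ t₀) (γ t₀))) :=
    htau_cont.continuousAt.comp_continuousWithinAt (continuousWithinAt_const.prodMk hγt)
  rw [hdiag] at hψ hψ'
  have hev1 : ∀ᶠ t in nhdsWithin t₀ (Set.Icc a b), L.tau (γ t) (γ t₀) < ε :=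
    hψ.eventually_lt_const hε
  have hev2 : ∀ᶠ t in nhdsWithin t₀ (Set.Icc a b), L.tau (γ t₀) (γ t) < ε :=
    hψ'.eventually_lt_const hε
  filter_upwards [hev1, hev2, eventually_mem_nhdsWithin] with t h1t h2t htI
  simp only [Set.mem_Icc]
  rcases le_total t t₀ with hle | hle
  · constructor
    · rw [tsub_le_iff_right]
      rcases eq_or_lt_of_le hle with he | hlt
      · rw [he]; exact le_self_add
      · exact le_trans (tauLength_subadd L γ a hlt) (add_le_add_right h1t.le _)
    · exact le_trans (tauLength_mono L hγ htI.1 hle ht₀.2) le_self_add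
  · constructor
    · exact le_trans tsub_le_self (tauLength_mono L hγ ht₀.1 hle htI.2)
    · rcases eq_or_lt_of_le hle with he | hlt
      · rw [← he]; exact le_self_add
      · exact le_trans (tauLength_subadd L γ a hlt) (add_le_add_right h2t.le _)
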